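/- Let G be a Hausdorff topological group, Γ a group, B a compact subgroup of G, and N a normal subgroup of G. Let f, b, z, d : Γ → G be maps such that for every γ ∈ Γ: f(γ) = b(γ) z(γ) d(γ), b(γ) ∈ B, z(γ) centralizes N (z(γ) x = x z(γ) for all x ∈ N), and d(γ) ∈ N. Assume that f is a quasihomomorphism with D_f ⊆ N, and that d(Γ) is contained in a compact subset of G. Then the map f' : Γ → G defined by f'(γ) := b(γ) z(γ) is a quasihomomorphism, f' is close to f, and D_{f'} ⊆ N. -/

import Mathlib

open Pointwise


/-- The defect set of a map `f : Γ → G`: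
`D_f = { f(y)⁻¹ f(x)⁻¹ f(xy) : x, y ∈ Γ }`. -/
def defectSet {Γ G : Type*} [Group Γ] [Group G] (f : Γ → G) : Set G :=
  {d | ∃ x y : Γ, d = (f y)⁻¹ * (f x)⁻¹ * f (x * y)}

/-- The final modification: if `f = b·z·d` with `b` taking values in a compact subgroup
`B`, `z` taking values in the centralizer of a normal subgroup `N ⊇ D_f`, and `d`
taking bounded values in `N`, then `f' := b·z` is a quasihomomorphism close to `f`
whose defect is still contained in `N`. -/
theorem final_modification {Γ G : Type*} [Group Γ] [Group G]
    [TopologicalSpace G] [IsTopologicalGroup G] [T2Space G]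
    (B : Subgroup G) (hB : IsCompact (B : Set G))
    (N : Subgroup G) [N.Normal]
    (f b z d : Γ → G)
    (hdecomp : ∀ γ : Γ, f γ = b γ * z γ * d γ)
    (hb : ∀ γ : Γ, b γ ∈ B)
    (hz : ∀ γ : Γ, ∀ x ∈ N, z γ * x = x * z γ)
    (hd : ∀ γ : Γ, d γ ∈ N)
    (hf : ∃ K : Set G, IsCompact K ∧ defectSet f ⊆ K)
    (hDf : defectSet f ⊆ (N : Set G))
    (hdbdd : ∃ K : Set G, IsCompact K ∧ ∀ γ : Γ, d γ ∈ K) :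
    -- f' := b · z is a quasihomomorphism close to f, with defect in N
    (∃ K : Set G, IsCompact K ∧ defectSet (fun γ => b γ * z γ) ⊆ K) ∧
    (∃ K : Set G, IsCompact K ∧ ∀ γ : Γ, (f γ)⁻¹ * (b γ * z γ) ∈ K) ∧
    defectSet (fun γ => b γ * z γ) ⊆ (N : Set G) := by
  obtain ⟨Kf, hKf, hKfsub⟩ := hf
  obtain ⟨Kd, hKd, hKdmem⟩ := hdbdd
  have hN : N.Normal := inferInstance
  have hnN : ∀ x y : Γ, (b y)⁻¹ * d x * b y ∈ N := by
    intro x y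
    have := hN.conj_mem (d x) (hd x) (b y)⁻¹
    simpa using this
  have hcomm : ∀ γ : Γ, ∀ x ∈ N, (z γ)⁻¹ * x * z γ = x := by
    intro γ x hx
    rw [mul_assoc, ← hz γ x hx, inv_mul_cancel_left]
  have key : ∀ x y : Γ,
      ((fun γ => b γ * z γ) y)⁻¹ * ((fun γ => b γ * z γ) x)⁻¹ * (fun γ => b γ * z γ) (x * y)
        = ((b y)⁻¹ * d x * b y) * d y * ((f y)⁻¹ * (f x)⁻¹ * f (x * y)) * (d (x * y))⁻¹ := by
    intro x y
    have hc : (z y)⁻¹ * ((b y)⁻¹ * d x * b y) * z y = (b y)⁻¹ * d x * b y :=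
      hcomm y _ (hnN x y)
    simp only []
    rw [hdecomp x, hdecomp y, hdecomp (x * y), ← hc]
    group
  refine ⟨⟨((B : Set G) * Kd * B) * Kd * Kf * Kd⁻¹,
      ((((hB.mul hKd).mul hB).mul hKd).mul hKf).mul hKd.inv, ?_⟩,
      ⟨Kd⁻¹, hKd.inv, ?_⟩, ?_⟩
  · rintro g ⟨x, y, rfl⟩
    rw [key x y]
    exact Set.mul_mem_mul (Set.mul_mem_mul (Set.mul_mem_mul
      (Set.mul_mem_mul (Set.mul_mem_mul (B.inv_mem (hb y)) (hKdmem x)) (hb y))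
      (hKdmem y)) (hKfsub ⟨x, y, rfl⟩)) (Set.inv_mem_inv.mpr (hKdmem (x * y)))
  · intro γ
    have : (f γ)⁻¹ * (b γ * z γ) = (d γ)⁻¹ := by
      rw [hdecomp γ]; group
    rw [this]
    exact Set.inv_mem_inv.mpr (hKdmem γ)
  · rintro g ⟨x, y, rfl⟩
    rw [key x y]
    exact mul_mem (mul_mem (mul_mem (hnN x y) (hd y)) (hDf ⟨x, y, rfl⟩))
      (inv_mem (hd (x * y)))
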